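/- Until on ultimately periodic words reduces to the finite prefix: for an ultimately periodic word uv^ω with v nonempty, and for |u| ≤ i < |uv|, the suffix (uv^ω)[i,∞) satisfies φ₁ U φ₂ if and only if there exists j with |u| ≤ j < |uv| such that (uv^ω)[j,∞) ⊨ φ₂ and for all t ∈ I_{u,v}(i,j), (uv^ω)[t,∞) ⊨ φ₁, where I_{u,v}(i,j) = {i,…,j−1} if i ≤ j and I_{u,v}(i,j) = {|u|,…,j−1} ∪ {i,…,|uv|−1} if i > j. -/

import Mathlib

def upWord {A : Type*} (u v : List A) (hv : v ≠ []) : ℕ → A :=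
  fun n =>
    if h : n < u.length then u.get ⟨n, h⟩
    else v.get ⟨(n - u.length) % v.length, Nat.mod_lt _ (List.length_pos_of_ne_nil hv)⟩

def suffix {A : Type*} (w : ℕ → A) (i : ℕ) : ℕ → A := fun n => w (i + n)

inductive LTL (P : Type*) where
  | atom : P → LTL P
  | not : LTL P → LTL P
  | or : LTL P → LTL P → LTL P
  | next : LTL P → LTL P
  | untl : LTL P → LTL P → LTL P

/-- Satisfaction of an LTL formula at position `i` of the infinite word `w`. -/
def SatAt {P : Type*} (w : ℕ → Set P) : ℕ → LTL P → Prop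
  | i, .atom p => p ∈ w i
  | i, .not φ => ¬ SatAt w i φ
  | i, .or φ ψ => SatAt w i φ ∨ SatAt w i ψ
  | i, .next φ => SatAt w (i + 1) φ
  | i, .untl φ ψ => ∃ j, i ≤ j ∧ SatAt w j ψ ∧ ∀ t, i ≤ t → t < j → SatAt w t φ

/-- The index set `I_{u,v}(i,j)` from the until-constraint. -/
def Iset (lu lv i j : ℕ) : Set ℕ :=
  if i ≤ j then Set.Ico i j else Set.Ico lu j ∪ Set.Ico i (lu + lv)

lemma sat_congr {P : Type*} (φ : LTL P) : ∀ (w : ℕ → Set P) (i k : ℕ),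
    (∀ n, w (i + n) = w (k + n)) → SatAt w i φ → SatAt w k φ := by
  induction φ with
  | atom p => intro w i k h hs
              have := h 0
              simp only [Nat.add_zero] at this
              simpa [SatAt, ← this] using hs
  | not φ ih => intro w i k h hs hk
                exact hs (ih w k i (fun n => (h n).symm) hk)
  | or φ ψ ih1 ih2 => intro w i k h hs
                      rcases hs with hs | hs
                      · exact Or.inl (ih1 w i k h hs)
                      · exact Or.inr (ih2 w i k h hs)
  | next φ ih => intro w i k h hs
                 exact ih w (i+1) (k+1) (fun n => by
                   have := h (n+1)
                   rw [show i + (n+1) = i + 1 + n by omega,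
                       show k + (n+1) = k + 1 + n by omega] at this
                   exact this) hs
  | untl φ ψ ih1 ih2 =>
    intro w i k h hs
    obtain ⟨j, hij, hψ, hφ⟩ := hs
    refine ⟨k + (j - i), Nat.le_add_right _ _, ?_, ?_⟩
    · refine ih2 w j (k + (j - i)) (fun n => ?_) hψ
      have := h (j - i + n)
      rw [show i + (j - i + n) = j + n by omega,
          show k + (j - i + n) = k + (j - i) + n by omega] at this
      exact this
    · intro t hkt htj
      refine ih1 w (i + (t - k)) t (fun n => ?_) (hφ _ (by omega) (by omega))
      have := h (t - k + n)
      rw [show i + (t - k + n) = i + (t - k) + n by omega,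
          show k + (t - k + n) = t + n by omega] at this
      exact this

lemma upWord_period {A : Type*} (u v : List A) (hv : v ≠ []) {m : ℕ}
    (hm : u.length ≤ m) : upWord u v hv (m + v.length) = upWord u v hv m := by
  have hlv := List.length_pos_iff.mpr hv
  unfold upWord
  rw [dif_neg (by omega), dif_neg (by omega)]
  congr 1
  ext
  simp only
  rw [show m + v.length - u.length = (m - u.length) + v.length by omega,
      Nat.add_mod_right]

lemma sat_period {P : Type*} (u v : List (Set P)) (hv : v ≠ []) (φ : LTL P) {x : ℕ}
    (hx : u.length ≤ x) :
    SatAt (upWord u v hv) (x + v.length) φ ↔ SatAt (upWord u v hv) x φ := by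
  constructor
  · exact sat_congr φ _ _ _ (fun n => by
      rw [show x + v.length + n = (x + n) + v.length by omega,
          upWord_period u v hv (by omega)])
  · exact sat_congr φ _ _ _ (fun n => by
      rw [show x + v.length + n = (x + n) + v.length by omega,
          upWord_period u v hv (by omega)])

lemma sat_add_mul {P : Type*} (u v : List (Set P)) (hv : v ≠ []) (φ : LTL P) (q : ℕ)
    {x : ℕ} (hx : u.length ≤ x) :
    SatAt (upWord u v hv) (x + q * v.length) φ ↔ SatAt (upWord u v hv) x φ := by
  induction q with
  | zero => simp
  | succ q ih =>
    rw [show x + (q+1) * v.length = (x + q * v.length) + v.length by ring,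
        sat_period u v hv φ (by omega), ih]

theorem until_on_prefix {P : Type*} (u v : List (Set P)) (hv : v ≠ [])
    (φ₁ φ₂ : LTL P) (i : ℕ) (h1 : u.length ≤ i) (h2 : i < u.length + v.length) :
    SatAt (upWord u v hv) i (.untl φ₁ φ₂) ↔
      ∃ j, u.length ≤ j ∧ j < u.length + v.length ∧ SatAt (upWord u v hv) j φ₂ ∧
        ∀ t ∈ Iset u.length v.length i j, SatAt (upWord u v hv) t φ₁ := by
  have hlv : 0 < v.length := List.length_pos_iff.mpr hv
  constructor
  · rintro ⟨j, hij, hψ, hφ⟩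
    by_cases hj : j < u.length + v.length
    · refine ⟨j, by omega, hj, hψ, ?_⟩
      intro t ht
      simp only [Iset, if_pos hij, Set.mem_Ico] at ht
      exact hφ t ht.1 ht.2
    · push_neg at hj
      by_cases hji : i + v.length ≤ j
      · -- every position in [lu, lu+lv) satisfies φ₁
        have hall : ∀ t, u.length ≤ t → t < u.length + v.length →
            SatAt (upWord u v hv) t φ₁ := by
          intro t h1t h2t
          by_cases hti : i ≤ t
          · exact hφ t hti (by omega)
          · exact (sat_period u v hv φ₁ h1t).mp (hφ (t + v.length) (by omega) (by omega))
        have hjq : j = (u.length + (j - u.length) % v.length) +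
            ((j - u.length) / v.length) * v.length := by
          have := Nat.mod_add_div' (j - u.length) v.length
          omega
        have hmod := Nat.mod_lt (j - u.length) hlv
        refine ⟨u.length + (j - u.length) % v.length, by omega, by omega, ?_, ?_⟩
        · have := (sat_add_mul u v hv φ₂ ((j - u.length) / v.length)
            (x := u.length + (j - u.length) % v.length) (by omega)).mp
          apply this
          rw [← hjq]; exact hψ
        · intro t ht
          unfold Iset at ht
          split at ht
          · simp only [Set.mem_Ico] at ht
            exact hall t (by omega) (by omega)
          · simp only [Set.mem_union, Set.mem_Ico] at ht
            rcases ht with ht | ht <;> exact hall t (by omega) (by omega)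
      · push_neg at hji
        refine ⟨j - v.length, by omega, by omega, ?_, ?_⟩
        · refine (sat_period u v hv φ₂ (x := j - v.length) (by omega)).mp ?_
          rw [show j - v.length + v.length = j by omega]; exact hψ
        · intro t ht
          simp only [Iset, if_neg (by omega : ¬ i ≤ j - v.length), Set.mem_union,
            Set.mem_Ico] at ht
          rcases ht with ht | ht
          · refine (sat_period u v hv φ₁ (x := t) (by omega)).mp ?_
            exact hφ (t + v.length) (by omega) (by omega)
          · exact hφ t ht.1 (by omega)
  · rintro ⟨j, hj1, hj2, hψ, hφ⟩
    by_cases hij : i ≤ j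
    · refine ⟨j, hij, hψ, ?_⟩
      intro t ht1 ht2
      exact hφ t (by simp only [Iset, if_pos hij, Set.mem_Ico]; omega)
    · push_neg at hij
      refine ⟨j + v.length, by omega, (sat_period u v hv φ₂ hj1).mpr hψ, ?_⟩
      intro t ht1 ht2
      by_cases htl : t < u.length + v.length
      · exact hφ t (by simp only [Iset, if_neg (by omega : ¬ i ≤ j), Set.mem_union,
          Set.mem_Ico]; omega)
      · have h' : SatAt (upWord u v hv) (t - v.length) φ₁ :=
          hφ (t - v.length) (by simp only [Iset, if_neg (by omega : ¬ i ≤ j),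
            Set.mem_union, Set.mem_Ico]; omega)
        have := (sat_period u v hv φ₁ (x := t - v.length) (by omega)).mpr h'
        rwa [show t - v.length + v.length = t by omega] at this
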